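/- There exists R₀ > 1 such that for all R > R₀: H⁻¹(V⁺) ⊂ V⁺, and there exist constants C₁, C₂ > 0 (depending only on a, b) such that for every w = (x,y,z) ∈ V⁺, writing H⁻¹(w) = (x₁,y₁,z₁), one has C₁|z|³ < |z₁| < C₂|z|³. -/

import Mathlib

open Complex Filter Topology

/-- The quadratic automorphism `H(x,y,z) = (xy + az, x² + by, x)` of `ℂ³`. -/
noncomputable def H (a b : ℂ) (w : ℂ × ℂ × ℂ) : ℂ × ℂ × ℂ :=
  (w.1 * w.2.1 + a * w.2.2, w.1 ^ 2 + b * w.2.1, w.1)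

/-- The inverse automorphism
`H⁻¹(x,y,z) = (z, (y − z²)/b, (x − z(y − z²)/b)/a)`. -/
noncomputable def Hinv (a b : ℂ) (w : ℂ × ℂ × ℂ) : ℂ × ℂ × ℂ :=
  (w.2.2, (w.2.1 - w.2.2 ^ 2) / b,
    (w.1 - w.2.2 * ((w.2.1 - w.2.2 ^ 2) / b)) / a)

/-- `V⁺ = {(x,y,z) : |z| > max{R, |x|, (1+δ)|y|^{1/2}}}`. -/
def Vplus (δ R : ℝ) : Set (ℂ × ℂ × ℂ) :=
  {w | ‖w.2.2‖ >
    max R (max (‖w.1‖) ((1 + δ) * Real.sqrt (‖w.2.1‖)))}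

/-- `U⁻ = ⋃_{n≥0} Hⁿ(V⁺)`. -/
noncomputable def Uminus (a b : ℂ) (δ R : ℝ) : Set (ℂ × ℂ × ℂ) :=
  ⋃ n : ℕ, (H a b)^[n] '' Vplus δ R

/-- `K⁻ = ℂ³ \ U⁻`. -/
noncomputable def Kminus (a b : ℂ) (δ R : ℝ) : Set (ℂ × ℂ × ℂ) :=
  (Uminus a b δ R)ᶜ

set_option maxHeartbeats 1000000 in
/-- there exists `R₀ > 1` such that for all `R > R₀`:
`H⁻¹(V⁺) ⊂ V⁺`, and there exist constants `C₁, C₂ > 0` (depending only on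
`a, b`) such that for every `w = (x,y,z) ∈ V⁺`, writing `H⁻¹(w) = (x₁,y₁,z₁)`,
one has `C₁|z|³ < |z₁| < C₂|z|³`. -/
theorem stmt1 (a b : ℂ) (ha : a ≠ 0) (hb : b ≠ 0) (δ : ℝ) (hδ : 0 < δ)
    (hbδ : ‖b‖ = 1 + δ) :
    ∃ R₀ > (1 : ℝ), ∃ C₁ > (0 : ℝ), ∃ C₂ > (0 : ℝ), ∀ R > R₀,
      Hinv a b '' Vplus δ R ⊆ Vplus δ R ∧
      ∀ w ∈ Vplus δ R,
        C₁ * (‖w.2.2‖) ^ 3 < ‖(Hinv a b w).2.2‖ ∧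
        ‖(Hinv a b w).2.2‖ < C₂ * (‖w.2.2‖) ^ 3 := by
  obtain ⟨A, hAdef⟩ : ∃ A : ℝ, A = ‖a‖ := ⟨_, rfl⟩
  have hA0 : 0 < A := hAdef ▸ norm_pos_iff.mpr ha
  obtain ⟨t, htdef⟩ : ∃ t : ℝ, t = 1 + δ := ⟨_, rfl⟩
  have ht1 : (1:ℝ) < t := by rw [htdef]; linarith
  have ht0 : (0:ℝ) < t := by linarith
  have hbt : ‖b‖ = t := by rw [hbδ, htdef]
  obtain ⟨α, hαdef⟩ : ∃ α : ℝ, α = 1 - 1/t^2 := ⟨_, rfl⟩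
  have hα0 : 0 < α := by
    have h1 : 1/t^2 < 1 := by
      rw [div_lt_one (by positivity)]
      have h2 := mul_lt_mul_of_pos_left ht1 ht0
      linarith
    rw [hαdef]; linarith
  obtain ⟨C₁, hC₁def⟩ : ∃ C₁ : ℝ, C₁ = α/(2*t*A) := ⟨_, rfl⟩
  have hC₁0 : 0 < C₁ := by rw [hC₁def]; positivity
  refine ⟨1 + 2*t/α + 2*t/C₁, ?_, C₁, hC₁0, 3/A, by positivity, ?_⟩
  · have h1 : 0 < 2*t/α := by positivity
    have h2 : 0 < 2*t/C₁ := by positivity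
    linarith
  intro R hR
  have hR1 : 1 < R := by
    have h1 : 0 < 2*t/α := by positivity
    have h2 : 0 < 2*t/C₁ := by positivity
    linarith
  -- main bounds for a point in Vplus
  have key : ∀ w ∈ Vplus δ R,
      (C₁ * (‖w.2.2‖) ^ 3 < ‖(Hinv a b w).2.2‖ ∧
        ‖(Hinv a b w).2.2‖ < 3/A * (‖w.2.2‖) ^ 3) ∧
      Hinv a b w ∈ Vplus δ R := by
    intro w hw
    obtain ⟨x, y, z⟩ := w
    simp only [Vplus, Set.mem_setOf_eq, max_lt_iff] at hw
    rw [← htdef] at hw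
    obtain ⟨hZR, hZX, hZY⟩ := hw
    obtain ⟨Z, hZdef⟩ : ∃ Z : ℝ, Z = ‖z‖ := ⟨_, rfl⟩
    obtain ⟨X, hXdef⟩ : ∃ X : ℝ, X = ‖x‖ := ⟨_, rfl⟩
    obtain ⟨Y, hYdef⟩ : ∃ Y : ℝ, Y = ‖y‖ := ⟨_, rfl⟩
    rw [← hZdef] at hZR hZX hZY
    rw [← hXdef] at hZX
    rw [← hYdef] at hZY
    have hZ1 : 1 < Z := lt_trans hR1 hZR
    have hZ0 : 0 < Z := by linarith
    have hX0 : 0 ≤ X := hXdef ▸ norm_nonneg x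
    have hZsq : Z < Z^2 := by
      have h := mul_lt_mul_of_pos_left hZ1 hZ0; linarith
    have hZcube : Z^2 < Z^3 := by
      have h := mul_lt_mul_of_pos_left hZ1 (show (0:ℝ) < Z^2 by positivity)
      linarith
    have hZa : 2*t/α < Z := by
      have h2 : 0 < 2*t/C₁ := by positivity
      linarith
    have hZc : 2*t/C₁ < Z := by
      have h2 : 0 < 2*t/α := by positivity
      linarith
    have hZa2' : 2*t < α * Z^2 := by
      rw [div_lt_iff₀ hα0] at hZa
      have h1 := mul_lt_mul_of_pos_left hZsq hα0
      linarith
    have hZc2' : 2*t < C₁ * Z^2 := by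
      rw [div_lt_iff₀ hC₁0] at hZc
      have h1 := mul_lt_mul_of_pos_left hZsq hC₁0
      linarith
    -- bound on Y
    have hY0 : 0 ≤ Y := hYdef ▸ norm_nonneg y
    have hsY : Real.sqrt Y < Z / t := by
      rw [lt_div_iff₀ ht0]; linarith
    have hYb : Y < Z^2 / t^2 := by
      have h1 : Real.sqrt Y ^ 2 = Y := Real.sq_sqrt hY0
      have h2 : Real.sqrt Y ^ 2 < (Z/t)^2 := by
        rw [pow_two, pow_two]
        exact mul_self_lt_mul_self (Real.sqrt_nonneg Y) hsY
      rw [h1] at h2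
      calc Y < (Z/t)^2 := h2
        _ = Z^2/t^2 := by ring
    have hYb2 : Y < Z^2 := by
      have h1 : Z^2/t^2 < Z^2 := by
        rw [div_lt_iff₀ (by positivity)]
        have h0 : (1:ℝ) < t^2 := by
          have h2 := mul_lt_mul_of_pos_left ht1 ht0
          linarith
        have := mul_lt_mul_of_pos_left h0 (show (0:ℝ) < Z^2 by positivity)
        linarith
      linarith
    -- bound on |y - z²|
    have habsz2 : ‖(z^2)‖ = Z^2 := by rw [norm_pow, ← hZdef]
    have hsub_lo : α * Z^2 < ‖(y - z^2)‖ := by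
      have h1 : ‖(z^2)‖ - ‖y‖ ≤ ‖(z^2 - y)‖ :=
        norm_sub_norm_le _ _
      have h2 : ‖(z^2 - y)‖ = ‖(y - z^2)‖ := by
        rw [← norm_neg]; ring_nf
      rw [h2, habsz2, ← hYdef] at h1
      have h3 : α * Z^2 = Z^2 - Z^2/t^2 := by rw [hαdef]; ring
      rw [h3]
      linarith
    have hsub_hi : ‖(y - z^2)‖ < 2 * Z^2 := by
      have h1 : ‖(y - z^2)‖ ≤ ‖y‖ + ‖(-(z^2))‖ := by
        rw [sub_eq_add_neg]; exact norm_add_le _ _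
      rw [norm_neg, habsz2, ← hYdef] at h1
      linarith
    -- bound on |y₁|
    have hy1abs : ‖((y - z^2)/b)‖ = ‖(y - z^2)‖ / t := by
      rw [norm_div, hbt]
    obtain ⟨W, hWdef⟩ : ∃ W : ℝ, W = ‖((y - z^2)/b)‖ := ⟨_, rfl⟩
    have hW0 : 0 ≤ W := hWdef ▸ norm_nonneg _
    have hy1lo : α * Z^2 / t < W := by
      rw [hWdef, hy1abs, div_lt_div_iff₀ ht0 ht0]
      have := mul_lt_mul_of_pos_right hsub_lo ht0
      linarith
    have hy1hi : W < 2 * Z^2 / t := by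
      rw [hWdef, hy1abs, div_lt_div_iff₀ ht0 ht0]
      have := mul_lt_mul_of_pos_right hsub_hi ht0
      linarith
    -- bound on |z₁|
    obtain ⟨N, hNdef⟩ : ∃ N : ℝ, N = ‖(x - z * ((y - z^2)/b))‖ := ⟨_, rfl⟩
    have hnum_lo : Z * W - X ≤ N := by
      have h1 : ‖(z * ((y - z^2)/b))‖ - ‖x‖ ≤
          ‖(z * ((y - z^2)/b) - x)‖ := norm_sub_norm_le _ _
      have h2 : ‖(z * ((y - z^2)/b) - x)‖ =
          ‖(x - z * ((y - z^2)/b))‖ := by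
        rw [← norm_neg]; ring_nf
      rw [h2, norm_mul, ← hNdef, ← hZdef, ← hWdef, ← hXdef] at h1
      linarith
    have hnum_hi : N ≤ X + Z * W := by
      have h1 : ‖(x - z * ((y - z^2)/b))‖ ≤
          ‖x‖ + ‖(-(z * ((y - z^2)/b)))‖ := by
        rw [sub_eq_add_neg]; exact norm_add_le _ _
      rw [norm_neg, norm_mul, ← hNdef, ← hZdef, ← hWdef, ← hXdef] at h1
      exact h1
    have hHinvabs : ‖(Hinv a b (x, y, z)).2.2‖ = N / A := by
      show ‖((x - z * ((y - z^2)/b))/a)‖ = N / A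
      rw [norm_div, ← hNdef, ← hAdef]
    have hN_lo : α * Z^3 / t - Z < N := by
      have h2 := mul_lt_mul_of_pos_right hy1lo hZ0
      have h3 : α * Z^3 / t = α * Z^2 / t * Z := by ring
      rw [h3]
      linarith
    have hN_hi : N < Z + 2 * Z^3 / t := by
      have h2 := mul_lt_mul_of_pos_right hy1hi hZ0
      have h3 : 2 * Z^2 / t * Z = 2 * Z^3 / t := by ring
      rw [h3] at h2
      linarith
    have h2tZ : 2 * t * Z < α * Z^3 := by
      have := mul_lt_mul_of_pos_right hZa2' hZ0
      have h3 : α * Z^2 * Z = α * Z^3 := by ring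
      linarith [h3 ▸ this]
    have h2tZc : 2 * t * Z < C₁ * Z^3 := by
      have := mul_lt_mul_of_pos_right hZc2' hZ0
      have h3 : C₁ * Z^2 * Z = C₁ * Z^3 := by ring
      linarith [h3 ▸ this]
    have hz1lo : C₁ * Z^3 < N / A := by
      have hC : C₁ * Z^3 = α * Z^3 / (2*t*A) := by rw [hC₁def]; ring
      rw [hC, div_lt_div_iff₀ (by positivity) hA0]
      have h5 : (α * Z^3 / t - Z) * (2*t*A) = 2 * α * Z^3 * A - 2*t*Z*A := by
        field_simp
      have h6 := mul_lt_mul_of_pos_right hN_lo (show (0:ℝ) < 2*t*A by positivity)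
      rw [h5] at h6
      have h7 := mul_lt_mul_of_pos_right h2tZ hA0
      linarith
    have hz1hi : N / A < 3/A * Z^3 := by
      rw [div_lt_iff₀ hA0]
      have h3 : 2 * Z^3 / t < 2 * Z^3 := by
        rw [div_lt_iff₀ ht0]
        have := mul_lt_mul_of_pos_left ht1 (show (0:ℝ) < 2*Z^3 by positivity)
        linarith
      have h4 : N < 3 * Z^3 := by linarith
      calc N < 3 * Z^3 := h4
        _ = 3/A * Z^3 * A := by field_simp
    have hbounds : C₁ * Z^3 < ‖(Hinv a b (x, y, z)).2.2‖ ∧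
        ‖(Hinv a b (x, y, z)).2.2‖ < 3/A * Z^3 := by
      rw [hHinvabs]; exact ⟨hz1lo, hz1hi⟩
    have hZ3eq : (‖((x, y, z) : ℂ × ℂ × ℂ).2.2‖) = Z := hZdef.symm
    refine ⟨by rw [hZ3eq]; exact hbounds, ?_⟩
    -- membership
    have hz1big : 2 * t * Z < N / A := by
      rw [← hHinvabs]; linarith [hbounds.1]
    simp only [Vplus, Set.mem_setOf_eq, Hinv, max_lt_iff]
    rw [← htdef]
    have hNA : ‖((x - z * ((y - z ^ 2) / b)) / a)‖ = N / A := by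
      rw [norm_div, ← hNdef, ← hAdef]
    rw [hNA, ← hZdef, ← hWdef]
    have hZ2tZ : Z < 2 * t * Z := by
      have := mul_lt_mul_of_pos_right (show (1:ℝ) < 2*t by linarith) hZ0
      linarith
    refine ⟨?_, ?_, ?_⟩
    · linarith
    · linarith
    · have hW4 : W < (2*Z)^2 := by
        have h2 : 2 * Z^2 / t < (2*Z)^2 := by
          rw [div_lt_iff₀ ht0]
          have := mul_lt_mul_of_pos_left ht1 (show (0:ℝ) < 2*Z^2 by positivity)
          have h5 : (0:ℝ) < 2*Z^2*t := by positivity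
          linarith
        linarith
      have hs : Real.sqrt W < 2 * Z := by
        rw [Real.sqrt_lt' (by linarith)]; exact hW4
      have h3 : t * Real.sqrt W < 2 * t * Z := by
        have := mul_lt_mul_of_pos_left hs ht0
        linarith
      linarith
  constructor
  · rintro w' ⟨w, hw, rfl⟩
    exact (key w hw).2
  · intro w hw
    exact (key w hw).1
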